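/- If σ: [0,∞) → ℝ satisfies the differential equation σ' = -K·|σ|^{1/2}·sgn(σ) with K > 0 and initial condition σ(0) = σ₀, then σ reaches zero in finite time; specifically σ(t) = 0 for all t ≥ 2|σ₀|^{1/2}/K. -/

import Mathlib

/-- If `f > 0` on `[0,T]` and `f' = -K √f` there, then `√(f T) + (K/2) T ≤ √(f 0)`. -/
lemma sqrt_decay_aux (K : ℝ) (f : ℝ → ℝ) (T : ℝ) (hT : 0 ≤ T)
    (hpos : ∀ s ∈ Set.Icc (0:ℝ) T, 0 < f s)
    (hder : ∀ s ∈ Set.Icc (0:ℝ) T, HasDerivAt f (-K * Real.sqrt (f s)) s) :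
    Real.sqrt (f T) + K / 2 * T ≤ Real.sqrt (f 0) + K / 2 * 0 := by
  set g : ℝ → ℝ := fun s => Real.sqrt (f s) + K / 2 * s with hg
  have hgd : ∀ s ∈ Set.Icc (0:ℝ) T, HasDerivAt g 0 s := by
    intro s hs
    have hfs := hpos s hs
    have h1 : HasDerivAt (fun u => Real.sqrt (f u))
        (1 / (2 * Real.sqrt (f s)) * (-K * Real.sqrt (f s))) s :=
      (Real.hasDerivAt_sqrt hfs.ne').comp s (hder s hs)
    have h2 : HasDerivAt g
        (1 / (2 * Real.sqrt (f s)) * (-K * Real.sqrt (f s)) + K / 2) s := by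
      exact (h1.add ((hasDerivAt_id s).const_mul (K / 2))).congr_deriv (by ring)
    have hsq : Real.sqrt (f s) ≠ 0 := (Real.sqrt_pos.mpr hfs).ne'
    have : 1 / (2 * Real.sqrt (f s)) * (-K * Real.sqrt (f s)) + K / 2 = 0 := by
      field_simp
      ring
    rwa [this] at h2
  have hanti : AntitoneOn g (Set.Icc 0 T) := by
    apply antitoneOn_of_deriv_nonpos (convex_Icc 0 T)
    · exact fun s hs => (hgd s hs).continuousAt.continuousWithinAt
    · intro s hs
      rw [interior_Icc] at hs
      exact (hgd s (Set.Ioo_subset_Icc_self hs)).differentiableAt.differentiableWithinAt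
    · intro s hs
      rw [interior_Icc] at hs
      exact le_of_eq (hgd s (Set.Ioo_subset_Icc_self hs)).deriv
  exact hanti (Set.left_mem_Icc.mpr hT) (Set.right_mem_Icc.mpr hT) hT

/-- Once σ is zero, it stays zero. -/
lemma sticky_zero (K : ℝ) (σ : ℝ → ℝ)
    (hderiv : ∀ t ≥ (0:ℝ), HasDerivAt σ (-K * |σ t| ^ ((1:ℝ)/2) * Real.sign (σ t)) t)
    (hK : 0 ≤ K)
    {t₁ t : ℝ} (h0 : 0 ≤ t₁) (h1 : t₁ ≤ t) (hz : σ t₁ = 0) : σ t = 0 := by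
  set A : ℝ → ℝ := fun s => (σ s) ^ 2 with hA
  have hAd : ∀ s ∈ Set.Icc t₁ t, HasDerivAt A
      ((2 : ℕ) * σ s ^ 1 * (-K * |σ s| ^ ((1:ℝ)/2) * Real.sign (σ s))) s := by
    intro s hs
    exact (hderiv s (h0.trans hs.1)).pow 2
  have hnonpos : ∀ s, (2 : ℕ) * σ s ^ 1 * (-K * |σ s| ^ ((1:ℝ)/2) * Real.sign (σ s)) ≤ 0 := by
    intro s
    have hrp : (0:ℝ) ≤ |σ s| ^ ((1:ℝ)/2) := Real.rpow_nonneg (abs_nonneg _) _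
    have hKr : 0 ≤ K * |σ s| ^ ((1:ℝ)/2) := mul_nonneg hK hrp
    rcases lt_trichotomy (σ s) 0 with h | h | h
    · rw [Real.sign_of_neg h]
      nlinarith [mul_nonneg hKr (neg_nonneg.mpr h.le)]
    · simp [h]
    · rw [Real.sign_of_pos h]
      nlinarith [mul_nonneg hKr h.le]
  have hanti : AntitoneOn A (Set.Icc t₁ t) := by
    apply antitoneOn_of_deriv_nonpos (convex_Icc t₁ t)
    · exact fun s hs => (hAd s hs).continuousAt.continuousWithinAt
    · intro s hs
      rw [interior_Icc] at hs
      exact (hAd s (Set.Ioo_subset_Icc_self hs)).differentiableAt.differentiableWithinAt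
    · intro s hs
      rw [interior_Icc] at hs
      rw [(hAd s (Set.Ioo_subset_Icc_self hs)).deriv]
      exact hnonpos s
  have h2 : A t ≤ A t₁ := hanti (Set.left_mem_Icc.mpr h1) (Set.right_mem_Icc.mpr h1) h1
  have h3 : A t₁ = 0 := by simp [hA, hz]
  have h4 : (0:ℝ) ≤ A t := sq_nonneg _
  have h5 : σ t ^ 2 = 0 := le_antisymm (h3 ▸ h2) h4
  exact pow_eq_zero_iff two_ne_zero |>.mp h5

theorem finite_time_convergence_sigma
    (K σ₀ : ℝ) (hK : 0 < K) (σ : ℝ → ℝ)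
    (hderiv : ∀ t ≥ (0:ℝ), HasDerivAt σ (-K * |σ t| ^ ((1:ℝ)/2) * Real.sign (σ t)) t)
    (hinit : σ 0 = σ₀) :
    ∀ t : ℝ, t ≥ 2 * |σ₀| ^ ((1:ℝ)/2) / K → σ t = 0 := by
  intro t ht
  set T : ℝ := 2 * |σ₀| ^ ((1:ℝ)/2) / K with hT
  have hrp : (0:ℝ) ≤ |σ₀| ^ ((1:ℝ)/2) := Real.rpow_nonneg (abs_nonneg _) _
  have hT0 : 0 ≤ T := by positivity
  -- σ has a zero in [0, T]
  have hzero : ∃ s ∈ Set.Icc (0:ℝ) T, σ s = 0 := by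
    by_contra hne
    push_neg at hne
    have hσ0 : σ 0 ≠ 0 := hne 0 (Set.left_mem_Icc.mpr hT0)
    have hcont : ∀ a b : ℝ, 0 ≤ a → ContinuousOn σ (Set.Icc a b) := fun a b ha s hs =>
      (hderiv s (ha.trans hs.1)).continuousAt.continuousWithinAt
    rcases lt_or_gt_of_ne hσ0 with hneg | hpos
    · -- σ 0 < 0 : use f = -σ
      have hposf : ∀ s ∈ Set.Icc (0:ℝ) T, 0 < -σ s := by
        intro s hs
        rcases lt_trichotomy (σ s) 0 with h | h | h
        · linarith
        · exact absurd h (hne s hs)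
        · exfalso
          have hsub : Set.Icc (σ 0) (σ s) ⊆ σ '' Set.Icc 0 s :=
            intermediate_value_Icc hs.1 (hcont 0 s le_rfl)
          obtain ⟨c, hc, hc0⟩ := hsub ⟨hneg.le, h.le⟩
          exact hne c ⟨hc.1, hc.2.trans hs.2⟩ hc0
      have hderf : ∀ s ∈ Set.Icc (0:ℝ) T,
          HasDerivAt (fun u => -σ u) (-K * Real.sqrt (-σ s)) s := by
        intro s hs
        have h := (hderiv s hs.1).neg
        have hσs : σ s < 0 := by linarith [hposf s hs]
        rw [Real.sign_of_neg hσs, abs_of_neg hσs, ← Real.sqrt_eq_rpow] at h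
        exact h.congr_deriv (by ring)
      have := sqrt_decay_aux K (fun u => -σ u) T hT0 hposf hderf
      have hs0 : Real.sqrt (-σ 0) = |σ₀| ^ ((1:ℝ)/2) := by
        rw [hinit, Real.sqrt_eq_rpow, abs_of_neg (hinit ▸ hneg : σ₀ < 0)]
      have hKT : K / 2 * T = |σ₀| ^ ((1:ℝ)/2) := by
        rw [hT]; field_simp
      have hle : Real.sqrt (-σ T) ≤ 0 := by
        rw [hs0, hKT] at this; linarith
      have : -σ T ≤ 0 := by
        by_contra h
        push_neg at h
        exact absurd hle (not_le.mpr (Real.sqrt_pos.mpr h))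
      linarith [hposf T (Set.right_mem_Icc.mpr hT0)]
    · -- σ 0 > 0 : use f = σ
      have hposf : ∀ s ∈ Set.Icc (0:ℝ) T, 0 < σ s := by
        intro s hs
        rcases lt_trichotomy (σ s) 0 with h | h | h
        · exfalso
          have hsub : Set.Icc (σ s) (σ 0) ⊆ σ '' Set.Icc 0 s :=
            intermediate_value_Icc' hs.1 (hcont 0 s le_rfl)
          obtain ⟨c, hc, hc0⟩ := hsub ⟨h.le, hpos.le⟩
          exact hne c ⟨hc.1, hc.2.trans hs.2⟩ hc0
        · exact absurd h (hne s hs)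
        · exact h
      have hderf : ∀ s ∈ Set.Icc (0:ℝ) T,
          HasDerivAt σ (-K * Real.sqrt (σ s)) s := by
        intro s hs
        have h := hderiv s hs.1
        have hσs : 0 < σ s := hposf s hs
        rw [Real.sign_of_pos hσs, abs_of_pos hσs, ← Real.sqrt_eq_rpow, mul_one] at h
        exact h
      have := sqrt_decay_aux K σ T hT0 hposf hderf
      have hs0 : Real.sqrt (σ 0) = |σ₀| ^ ((1:ℝ)/2) := by
        rw [hinit, Real.sqrt_eq_rpow, abs_of_pos (hinit ▸ hpos : 0 < σ₀)]
      have hKT : K / 2 * T = |σ₀| ^ ((1:ℝ)/2) := by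
        rw [hT]; field_simp
      have hle : Real.sqrt (σ T) ≤ 0 := by
        rw [hs0, hKT] at this; linarith
      have : σ T ≤ 0 := by
        by_contra h
        push_neg at h
        exact absurd hle (not_le.mpr (Real.sqrt_pos.mpr h))
      linarith [hposf T (Set.right_mem_Icc.mpr hT0)]
  obtain ⟨s, hs, hsz⟩ := hzero
  exact sticky_zero K σ hderiv hK.le hs.1 (hs.2.trans ht) hsz
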